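/- Assume BZ = 0, ZC = 0, and A^π·B·C = 0. Let W = A·A^d + A^d·B·C·A^d, let P = [[A^2·A^d, A·A^d·B], [C·A·A^d, C·A^d·B]], and let T = [[A·A^π, A^π·B], [0, Z]] + P^π·[[A^2·A^d, A·A^d·B], [C, C·A^d·B]]. Then the Drazin inverse of P is P^d = [I; C·A^d]·((A·W)^d)^2·A·[I, A^d·B] (the product of the (m+n)×m block column [I; C·A^d], the m×m matrix ((A·W)^d)^2·A, and the m×(m+n) block row [I, A^d·B]), the Drazin inverse of T is T^d = P^π·Σ_{j=0}^{n'−1} P^j·[[0, 0], [0, (Z^d)^{j+1}]] where n' is any positive integer with n' ≥ ind(P), and for any positive integer g with g ≥ ind(T), the Drazin inverse of M is M^d = P^d + Σ_{k=0}^{g−1} (P^d)^{k+2}·[[0, 0], [C·A^π, 0]]·T^k·T^π + T^d. -/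

import Mathlib

open Matrix Finset

/-- `X` is the Drazin inverse of `A`: `A X = X A`, `X A X = X`, and
`A^(k+1) X = A^k` for some (hence all sufficiently large) `k`. -/
def IsDrazinInverse {ι : Type*} [Fintype ι] [DecidableEq ι]
    (A X : Matrix ι ι ℂ) : Prop :=
  A * X = X * A ∧ X * A * X = X ∧ ∃ k : ℕ, A ^ (k + 1) * X = A ^ k

section Helpers
variable {ι : Type*} [Fintype ι] [DecidableEq ι]

theorem mul_ext {m' : Type*} [Fintype m'] {a b c : Matrix m' m' ℂ} (h : a * b = c) :
    ∀ {p : Type*} [Fintype p] (x : Matrix m' p ℂ), a * (b * x) = c * x := by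
  intro p _ x; rw [← Matrix.mul_assoc, h]

theorem comm_ext {m' : Type*} [Fintype m'] {a b : Matrix m' m' ℂ} (h : a * b = b * a) :
    ∀ {p : Type*} [Fintype p] (x : Matrix m' p ℂ), a * (b * x) = b * (a * x) := by
  intro p _ x; rw [← Matrix.mul_assoc, h, Matrix.mul_assoc]

namespace IsDrazinInverse
variable {A X : Matrix ι ι ℂ}

theorem comm (h : IsDrazinInverse A X) : A * X = X * A := h.1
theorem commute (h : IsDrazinInverse A X) : Commute A X := h.1
theorem xax (h : IsDrazinInverse A X) : X * A * X = X := h.2.1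
theorem xxa (h : IsDrazinInverse A X) : X * X * A = X := by
  have h2 := h.2.1; rw [Matrix.mul_assoc, h.1, ← Matrix.mul_assoc] at h2; exact h2
theorem axx (h : IsDrazinInverse A X) : A * X * X = X := by
  rw [h.1]; exact h.2.1
theorem xa_idem (h : IsDrazinInverse A X) : X * A * (X * A) = X * A := by
  rw [← Matrix.mul_assoc, h.2.1]
theorem ax_idem (h : IsDrazinInverse A X) : A * X * (A * X) = A * X := by
  rw [h.1]; rw [h.xa_idem]
theorem pow_stable (h : IsDrazinInverse A X) (d k : ℕ) (hk : A ^ (k + 1) * X = A ^ k) :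
    A ^ (k + d + 1) * X = A ^ (k + d) := by
  induction d with
  | zero => exact hk
  | succ d ih =>
      have h2 : A ^ (k + (d+1) + 1) * X = A * (A ^ (k + d + 1) * X) := by
        rw [← Matrix.mul_assoc, ← pow_succ']; ring_nf
      rw [h2, ih, ← pow_succ']; ring_nf
theorem x_pow (h : IsDrazinInverse A X) (j : ℕ) : X ^ (j + 1) * A ^ j = X := by
  rcases j with _ | j
  · simp
  · have h1 : X ^ (j+1) * A ^ (j+1) = (X*A)^(j+1) := ((Commute.mul_pow h.commute.symm) (j+1)).symm
    have h2 : (X*A)^(j+1) = X*A := IsIdempotentElem.pow_succ_eq j h.xa_idem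
    calc X ^ (j + 1 + 1) * A ^ (j+1) = X * (X ^ (j+1) * A ^ (j+1)) := by
          rw [← Matrix.mul_assoc, ← pow_succ']
      _ = X * (X * A) := by rw [h1, h2]
      _ = X := by rw [← Matrix.mul_assoc, h.xxa]
end IsDrazinInverse

theorem drazin_unique {A X Y : Matrix ι ι ℂ} (hX : IsDrazinInverse A X)
    (hY : IsDrazinInverse A Y) : X = Y := by
  obtain ⟨kx, hkx⟩ := hX.2.2
  obtain ⟨ky, hky⟩ := hY.2.2
  set j := kx + ky with hj
  have hjx : A ^ (j + 1) * X = A ^ j := hX.pow_stable ky kx hkx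
  have hjy : A ^ (j + 1) * Y = A ^ j := by
    have h2 := hY.pow_stable kx ky hky; rwa [Nat.add_comm ky kx] at h2
  have hXY : X = (X * A) * Y := by
    calc X = X ^ (j+1) * A ^ j := (hX.x_pow j).symm
      _ = X ^ (j+1) * (A ^ (j+1) * Y) := by rw [hjy]
      _ = (X ^ (j+1) * A ^ (j+1)) * Y := by rw [Matrix.mul_assoc]
      _ = (X * A) * Y := by
            rw [← Commute.mul_pow hX.commute.symm (j+1),
              IsIdempotentElem.pow_succ_eq j hX.xa_idem]
  have hYX : Y = (Y * A) * X := by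
    calc Y = Y ^ (j+1) * A ^ j := (hY.x_pow j).symm
      _ = Y ^ (j+1) * (A ^ (j+1) * X) := by rw [hjx]
      _ = (Y ^ (j+1) * A ^ (j+1)) * X := by rw [Matrix.mul_assoc]
      _ = (Y * A) * X := by
            rw [← Commute.mul_pow hY.commute.symm (j+1),
              IsIdempotentElem.pow_succ_eq j hY.xa_idem]
  have hfe : (Y * A) * (X * A) = X * A := by
    have h1 : (X*A : Matrix ι ι ℂ) = A ^ (j+1) * X ^ (j+1) := by
      rw [← Commute.mul_pow hX.commute (j+1),
        IsIdempotentElem.pow_succ_eq j hX.ax_idem, hX.comm]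
    have h2 : Y * A * A ^ (j+1) = A ^ (j+1) := by
      calc Y * A * A ^ (j+1) = Y * A ^ (j+2) := by rw [Matrix.mul_assoc, ← pow_succ']
        _ = A ^ (j+2) * Y := (Commute.pow_right hY.commute.symm (j+2))
        _ = A ^ (j+1+1) * Y := by norm_num
        _ = A ^ (j+1) := by
              have h3 := hY.pow_stable (kx+1) ky hky
              have e : ky + (kx+1) = j + 1 := by omega
              rwa [e] at h3
    rw [h1, ← Matrix.mul_assoc, h2]
  calc X = (X*A)*Y := hXY
    _ = ((Y*A)*(X*A))*Y := by rw [hfe]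
    _ = (Y*A)*((X*A)*Y) := by rw [Matrix.mul_assoc]
    _ = (Y*A)*X := by rw [← hXY]
    _ = Y := hYX.symm

theorem cline {κ : Type*} [Fintype κ] [DecidableEq κ]
    (U : Matrix ι κ ℂ) (V : Matrix κ ι ℂ) (Y : Matrix κ κ ℂ)
    (hY : IsDrazinInverse (V * U) Y) : IsDrazinInverse (U * V) (U * (Y * Y) * V) := by
  set S := V * U with hS
  have sYY : S * (Y * Y) = Y := by
    rw [← Matrix.mul_assoc, hY.1, Matrix.mul_assoc, ← Matrix.mul_assoc Y S Y, hY.2.1]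
  have YYs : (Y * Y) * S = Y := by
    rw [Matrix.mul_assoc, ← hY.1, ← Matrix.mul_assoc, Matrix.mul_assoc Y S Y, ← Matrix.mul_assoc,
      hY.2.1]
  have hUVpow : ∀ jj : ℕ, (U * V) ^ (jj + 1) = U * S ^ jj * V := by
    intro jj
    induction jj with
    | zero => simp
    | succ jj ih =>
        calc (U*V)^(jj+1+1) = (U * V)^(jj+1) * (U * V) := by rw [pow_succ]
          _ = U * S ^ jj * V * (U * V) := by rw [ih]
          _ = U * (S ^ jj * S) * V := by simp only [hS, Matrix.mul_assoc]
          _ = U * S ^ (jj+1) * V := by rw [← pow_succ]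
  refine ⟨?_, ?_, ?_⟩
  · -- commute: both sides equal U*Y*V
    calc U * V * (U * (Y*Y) * V) = U * (S * (Y*Y)) * V := by simp only [hS, Matrix.mul_assoc]
      _ = U * Y * V := by rw [sYY]
      _ = U * ((Y*Y) * S) * V := by rw [YYs]
      _ = U * (Y*Y) * V * (U * V) := by simp only [hS, Matrix.mul_assoc]
  · calc U * (Y*Y) * V * (U * V) * (U * (Y*Y) * V)
        = U * ((Y*Y) * S * (S * (Y*Y))) * V := by simp only [hS, Matrix.mul_assoc]
      _ = U * (Y * Y) * V := by rw [sYY, YYs]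
  · obtain ⟨k, hk⟩ := hY.2.2
    refine ⟨k + 2, ?_⟩
    have hk2 : S ^ (k + 2) * Y = S ^ (k+1) := by
      calc S ^ (k+2) * Y = S * (S ^ (k+1) * Y) := by rw [← Matrix.mul_assoc, ← pow_succ']
        _ = S * S ^ k := by rw [hk]
        _ = S ^ (k+1) := by rw [← pow_succ']
    have hk3 : S ^ (k + 3) * (Y * Y) = S ^ (k+1) := by
      calc S ^ (k+3) * (Y * Y) = (S * (S ^ (k+2) * Y)) * Y := by
            rw [← Matrix.mul_assoc, ← Matrix.mul_assoc, ← pow_succ']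
        _ = (S * S ^ (k+1)) * Y := by rw [hk2]
        _ = S ^ (k+2) * Y := by rw [← pow_succ']
        _ = S ^ (k+1) := hk2
    calc (U*V) ^ (k + 2 + 1) * (U * (Y*Y) * V) = (U * S ^ (k+2) * V) * (U * (Y*Y) * V) := by
          rw [hUVpow]
      _ = U * (S ^ (k+2) * S * (Y * Y)) * V := by simp only [hS, Matrix.mul_assoc]
      _ = U * (S ^ (k+3) * (Y * Y)) * V := by rw [← pow_succ]
      _ = U * S ^ (k+1) * V := by rw [hk3, Matrix.mul_assoc]
      _ = (U*V) ^ (k+2) := by rw [hUVpow]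

theorem fb_zero {l m' n' o : Type*} {a : Matrix n' l ℂ} {b : Matrix n' m' ℂ}
    {c : Matrix o l ℂ} {d : Matrix o m' ℂ}
    (ha : a = 0) (hb : b = 0) (hc : c = 0) (hd : d = 0) :
    Matrix.fromBlocks a b c d = (0 : Matrix (n' ⊕ o) (l ⊕ m') ℂ) := by
  rw [ha, hb, hc, hd, Matrix.fromBlocks_zero]

theorem fb_eq {l m' n' o : Type*} {a a' : Matrix n' l ℂ} {b b' : Matrix n' m' ℂ}
    {c c' : Matrix o l ℂ} {d d' : Matrix o m' ℂ}
    (ha : a = a') (hb : b = b') (hc : c = c') (hd : d = d') :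
    Matrix.fromBlocks a b c d = Matrix.fromBlocks a' b' c' d' := by
  rw [ha, hb, hc, hd]

theorem mul_ext3 {m' : Type*} [Fintype m'] {a b c d : Matrix m' m' ℂ} (h : a * b * c = d) :
    ∀ {p : Type*} [Fintype p] (x : Matrix m' p ℂ), a * (b * (c * x)) = d * x := by
  intro p _ x; rw [← Matrix.mul_assoc, ← Matrix.mul_assoc, h]

end Helpers

set_option maxHeartbeats 2000000 in
theorem stmt_9 {m n : ℕ}
    (A Ad : Matrix (Fin m) (Fin m) ℂ) (B : Matrix (Fin m) (Fin n) ℂ)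
    (C : Matrix (Fin n) (Fin m) ℂ) (D : Matrix (Fin n) (Fin n) ℂ)
    (hAd : IsDrazinInverse A Ad)
    (Z : Matrix (Fin n) (Fin n) ℂ) (hZ : Z = D - C * Ad * B)
    (Zd : Matrix (Fin n) (Fin n) ℂ) (hZd : IsDrazinInverse Z Zd)
    (hBZ : B * Z = 0) (hZC : Z * C = 0) (hABC : (1 - A * Ad) * B * C = 0)
    (AWd : Matrix (Fin m) (Fin m) ℂ)
    (hAWd : IsDrazinInverse (A * (A * Ad + Ad * B * C * Ad)) AWd)
    (P Pd : Matrix (Fin m ⊕ Fin n) (Fin m ⊕ Fin n) ℂ)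
    (hP : P = Matrix.fromBlocks (A ^ 2 * Ad) (A * Ad * B) (C * A * Ad) (C * Ad * B))
    (hPd : IsDrazinInverse P Pd)
    (T Td : Matrix (Fin m ⊕ Fin n) (Fin m ⊕ Fin n) ℂ)
    (hT : T = Matrix.fromBlocks (A * (1 - A * Ad)) ((1 - A * Ad) * B) 0 Z
      + (1 - P * Pd) *
        Matrix.fromBlocks (A ^ 2 * Ad) (A * Ad * B) C (C * Ad * B))
    (hTd : IsDrazinInverse T Td)
    (n' : ℕ) (hn' : 1 ≤ n')
    -- `n' ≥ ind P`
    (hn'P : P ^ n' * (1 - P * Pd) = 0)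
    (g : ℕ) (hg : 1 ≤ g)
    -- `g ≥ ind T`
    (hgT : T ^ g * (1 - T * Td) = 0) :
    Pd = Matrix.fromRows (1 : Matrix (Fin m) (Fin m) ℂ) (C * Ad) *
        (AWd ^ 2 * A) * Matrix.fromCols (1 : Matrix (Fin m) (Fin m) ℂ) (Ad * B) ∧
    Td = (1 - P * Pd) *
        ∑ j ∈ Finset.range n',
          P ^ j * Matrix.fromBlocks 0 0 0 (Zd ^ (j + 1)) ∧
    IsDrazinInverse (Matrix.fromBlocks A B C D)
      (Pd +
        (∑ k ∈ Finset.range g,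
          Pd ^ (k + 2) * Matrix.fromBlocks 0 0 (C * (1 - A * Ad)) 0 *
            T ^ k * (1 - T * Td))
        + Td) := by
  -- scalar facts over Fin m
  have cA : Ad * A = A * Ad := hAd.1.symm
  have cAx : ∀ {p : Type} [Fintype p] (x : Matrix (Fin m) p ℂ), Ad * (A * x) = A * (Ad * x) :=
    comm_ext cA
  have dA : A * (Ad * Ad) = Ad := by have h2 := hAd.axx; rwa [Matrix.mul_assoc] at h2
  have dAx : ∀ {p : Type} [Fintype p] (x : Matrix (Fin m) p ℂ), A * (Ad * (Ad * x)) = Ad * x :=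
    mul_ext3 hAd.axx
  -- B*Zd = 0, Zd*C = 0
  have hBZd : B * Zd = 0 := by
    have h1 : Zd = Z * (Zd * Zd) := by
      have := hZd.axx; rw [Matrix.mul_assoc] at this; exact this.symm
    rw [h1, ← Matrix.mul_assoc, hBZ, Matrix.zero_mul]
  have hZdC : Zd * C = 0 := by
    have h1 : Zd = Zd * Zd * Z := hZd.xxa.symm
    rw [h1, Matrix.mul_assoc, Matrix.mul_assoc, hZC, Matrix.mul_zero, Matrix.mul_zero]
  have hBZx : ∀ {p : Type} [Fintype p] (x : Matrix (Fin n) p ℂ), B * (Z * x) = 0 := by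
    intro p _ x; rw [← Matrix.mul_assoc, hBZ, Matrix.zero_mul]
  have hBZdx : ∀ {p : Type} [Fintype p] (x : Matrix (Fin n) p ℂ), B * (Zd * x) = 0 := by
    intro p _ x; rw [← Matrix.mul_assoc, hBZd, Matrix.zero_mul]
  have hZCx : ∀ {p : Type} [Fintype p] (x : Matrix (Fin m) p ℂ), Z * (C * x) = 0 := by
    intro p _ x; rw [← Matrix.mul_assoc, hZC, Matrix.zero_mul]
  have hZdCx : ∀ {p : Type} [Fintype p] (x : Matrix (Fin m) p ℂ), Zd * (C * x) = 0 := by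
    intro p _ x; rw [← Matrix.mul_assoc, hZdC, Matrix.zero_mul]
  -- Part 1
  set U : Matrix (Fin m ⊕ Fin n) (Fin m) ℂ := Matrix.fromRows 1 (C * Ad) with hU
  set R : Matrix (Fin m) (Fin m ⊕ Fin n) ℂ := Matrix.fromCols 1 (Ad * B) with hR
  set V : Matrix (Fin m) (Fin m ⊕ Fin n) ℂ := Matrix.fromCols (A ^ 2 * Ad) (A * Ad * B) with hV
  have p1 : P = U * V := by
    have h21 : C * Ad * (A ^ 2 * Ad) = C * A * Ad := by
      simp only [pow_two, Matrix.mul_assoc, cAx, cA, dAx, dA]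
    have h22 : C * Ad * (A * Ad * B) = C * Ad * B := by
      simp only [Matrix.mul_assoc, cAx, cA, dAx, dA]
    rw [hU, hV, Matrix.fromRows_mul_fromCols, Matrix.one_mul, Matrix.one_mul, h21, h22]
    exact hP
  have p2 : V * U = A * (A * Ad + Ad * B * C * Ad) := by
    rw [hV, hU, Matrix.fromCols_mul_fromRows, Matrix.mul_one]
    simp only [pow_two, Matrix.mul_add, Matrix.mul_assoc]
  have pCline : IsDrazinInverse P (U * (AWd * AWd) * V) := by
    rw [p1]
    exact cline U V AWd (by rw [← p2] at hAWd; exact hAWd)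
  have hW0 : (A * (A * Ad + Ad * B * C * Ad)) * (1 - A * Ad) = 0 := by
    simp only [Matrix.mul_add, Matrix.add_mul, Matrix.mul_sub, Matrix.sub_mul,
      Matrix.mul_one, Matrix.mul_assoc, cAx, cA, dAx, dA]
    abel
  have key : AWd * (1 - A * Ad) = 0 := by
    calc AWd * (1 - A*Ad) = AWd * AWd * (A * (A * Ad + Ad * B * C * Ad)) * (1 - A*Ad) := by
          rw [hAWd.xxa]
      _ = AWd * AWd * ((A * (A * Ad + Ad * B * C * Ad)) * (1 - A*Ad)) := by
          rw [Matrix.mul_assoc]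
      _ = 0 := by rw [hW0, Matrix.mul_zero]
  have part1 : Pd = U * (AWd ^ 2 * A) * R := by
    have e1 : Pd = U * (AWd * AWd) * V := drazin_unique hPd pCline
    have eA : AWd * AWd * (A ^ 2 * Ad) = AWd ^ 2 * A := by
      have hsplit : A ^ 2 * Ad = A - (1 - A * Ad) * A := by
        simp only [pow_two, Matrix.sub_mul, Matrix.one_mul, Matrix.mul_assoc, cAx, cA]
        abel
      rw [hsplit, Matrix.mul_sub, Matrix.mul_assoc AWd AWd ((1 - A*Ad)*A),
        ← Matrix.mul_assoc AWd (1 - A*Ad) A, key, Matrix.zero_mul, Matrix.mul_zero, sub_zero,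
        pow_two]
    have eB : AWd * AWd * (A * Ad * B) = AWd ^ 2 * A * (Ad * B) := by
      rw [pow_two]; simp only [Matrix.mul_assoc]
    have e2 : (AWd * AWd) * V = (AWd ^ 2 * A) * R := by
      rw [hV, hR, Matrix.mul_fromCols, Matrix.mul_fromCols, eA, eB, Matrix.mul_one]
    rw [e1, Matrix.mul_assoc, e2, ← Matrix.mul_assoc]
  clear p1 p2 pCline hW0 key
  -- ===== block matrices =====
  set N : Matrix (Fin m ⊕ Fin n) (Fin m ⊕ Fin n) ℂ :=
    Matrix.fromBlocks (A * (1 - A * Ad)) ((1 - A * Ad) * B) 0 Z with hN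
  set E : Matrix (Fin m ⊕ Fin n) (Fin m ⊕ Fin n) ℂ :=
    Matrix.fromBlocks 0 0 (C * (1 - A * Ad)) 0 with hE
  set F : Matrix (Fin m ⊕ Fin n) (Fin m ⊕ Fin n) ℂ :=
    Matrix.fromBlocks 0 0 0 Zd with hF
  set G : Matrix (Fin m ⊕ Fin n) (Fin m ⊕ Fin n) ℂ :=
    Matrix.fromBlocks 0 0 0 (Z * Zd) with hG
  -- extra scalar facts
  have hBCA : A * (Ad * (B * C)) = B * C := by
    have h1 : B * C - A * Ad * B * C = 0 := by
      have h0 := hABC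
      rwa [Matrix.sub_mul, Matrix.sub_mul, Matrix.one_mul] at h0
    have h2 := sub_eq_zero.mp h1
    simp only [Matrix.mul_assoc] at h2
    exact h2.symm
  have hBCAx : ∀ {p : Type} [Fintype p] (x : Matrix (Fin m) p ℂ),
      A * (Ad * (B * (C * x))) = B * (C * x) := by
    intro p _ x
    calc A * (Ad * (B * (C * x))) = (A * (Ad * (B * C))) * x := by
          simp only [Matrix.mul_assoc]
      _ = (B * C) * x := by rw [hBCA]
      _ = B * (C * x) := by rw [Matrix.mul_assoc]
  -- ===== primitive block identities =====
  have cZ : Zd * Z = Z * Zd := hZd.1.symm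
  have cZx : ∀ {p : Type} [Fintype p] (x : Matrix (Fin n) p ℂ), Zd * (Z * x) = Z * (Zd * x) :=
    comm_ext cZ
  have dZ : Z * (Zd * Zd) = Zd := by have h2 := hZd.axx; rwa [Matrix.mul_assoc] at h2
  have dZx : ∀ {p : Type} [Fintype p] (x : Matrix (Fin n) p ℂ), Z * (Zd * (Zd * x)) = Zd * x :=
    mul_ext3 hZd.axx
  have hPN : P * N = 0 := by
    rw [hP, hN, Matrix.fromBlocks_multiply]
    refine fb_zero ?_ ?_ ?_ ?_ <;>
      · simp only [pow_two, Matrix.mul_assoc, Matrix.mul_sub, Matrix.sub_mul, Matrix.mul_add,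
          Matrix.add_mul, Matrix.mul_one, Matrix.one_mul, Matrix.mul_zero, Matrix.zero_mul,
          cAx, cA, dAx, dA, cZx, cZ, dZx, dZ, hBZx, hBZ, hZCx, hZC, hBZdx, hBZd, hZdCx, hZdC,
          hBCAx, hBCA, add_zero, zero_add, sub_zero, sub_self]
  have hNP : N * P = 0 := by
    rw [hN, hP, Matrix.fromBlocks_multiply]
    refine fb_zero ?_ ?_ ?_ ?_ <;>
      · simp only [pow_two, Matrix.mul_assoc, Matrix.mul_sub, Matrix.sub_mul, Matrix.mul_add,
          Matrix.add_mul, Matrix.mul_one, Matrix.one_mul, Matrix.mul_zero, Matrix.zero_mul,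
          cAx, cA, dAx, dA, cZx, cZ, dZx, dZ, hBZx, hBZ, hZCx, hZC, hBZdx, hBZd, hZdCx, hZdC,
          hBCAx, hBCA, add_zero, zero_add, sub_zero, sub_self]
  have hEP : E * P = 0 := by
    rw [hE, hP, Matrix.fromBlocks_multiply]
    refine fb_zero ?_ ?_ ?_ ?_ <;>
      · simp only [pow_two, Matrix.mul_assoc, Matrix.mul_sub, Matrix.sub_mul, Matrix.mul_add,
          Matrix.add_mul, Matrix.mul_one, Matrix.one_mul, Matrix.mul_zero, Matrix.zero_mul,
          cAx, cA, dAx, dA, cZx, cZ, dZx, dZ, hBZx, hBZ, hZCx, hZC, hBZdx, hBZd, hZdCx, hZdC,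
          hBCAx, hBCA, add_zero, zero_add, sub_zero, sub_self]
  have hNE : N * E = 0 := by
    rw [hN, hE, Matrix.fromBlocks_multiply]
    refine fb_zero ?_ ?_ ?_ ?_ <;>
      · simp only [pow_two, Matrix.mul_assoc, Matrix.mul_sub, Matrix.sub_mul, Matrix.mul_add,
          Matrix.add_mul, Matrix.mul_one, Matrix.one_mul, Matrix.mul_zero, Matrix.zero_mul,
          cAx, cA, dAx, dA, cZx, cZ, dZx, dZ, hBZx, hBZ, hZCx, hZC, hBZdx, hBZd, hZdCx, hZdC,
          hBCAx, hBCA, add_zero, zero_add, sub_zero, sub_self]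
  have hEE : E * E = 0 := by
    rw [hE, Matrix.fromBlocks_multiply]
    refine fb_zero ?_ ?_ ?_ ?_ <;>
      · simp only [pow_two, Matrix.mul_assoc, Matrix.mul_sub, Matrix.sub_mul, Matrix.mul_add,
          Matrix.add_mul, Matrix.mul_one, Matrix.one_mul, Matrix.mul_zero, Matrix.zero_mul,
          cAx, cA, dAx, dA, cZx, cZ, dZx, dZ, hBZx, hBZ, hZCx, hZC, hBZdx, hBZd, hZdCx, hZdC,
          hBCAx, hBCA, add_zero, zero_add, sub_zero, sub_self]
  have hPF0 : P * F = 0 := by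
    rw [hP, hF, Matrix.fromBlocks_multiply]
    refine fb_zero ?_ ?_ ?_ ?_ <;>
      · simp only [pow_two, Matrix.mul_assoc, Matrix.mul_sub, Matrix.sub_mul, Matrix.mul_add,
          Matrix.add_mul, Matrix.mul_one, Matrix.one_mul, Matrix.mul_zero, Matrix.zero_mul,
          cAx, cA, dAx, dA, cZx, cZ, dZx, dZ, hBZx, hBZ, hZCx, hZC, hBZdx, hBZd, hZdCx, hZdC,
          hBCAx, hBCA, add_zero, zero_add, sub_zero, sub_self]
  have hFP : F * P = 0 := by
    rw [hF, hP, Matrix.fromBlocks_multiply]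
    refine fb_zero ?_ ?_ ?_ ?_ <;>
      · simp only [pow_two, Matrix.mul_assoc, Matrix.mul_sub, Matrix.sub_mul, Matrix.mul_add,
          Matrix.add_mul, Matrix.mul_one, Matrix.one_mul, Matrix.mul_zero, Matrix.zero_mul,
          cAx, cA, dAx, dA, cZx, cZ, dZx, dZ, hBZx, hBZ, hZCx, hZC, hBZdx, hBZd, hZdCx, hZdC,
          hBCAx, hBCA, add_zero, zero_add, sub_zero, sub_self]
  have hEF : E * F = 0 := by
    rw [hE, hF, Matrix.fromBlocks_multiply]
    refine fb_zero ?_ ?_ ?_ ?_ <;>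
      · simp only [pow_two, Matrix.mul_assoc, Matrix.mul_sub, Matrix.sub_mul, Matrix.mul_add,
          Matrix.add_mul, Matrix.mul_one, Matrix.one_mul, Matrix.mul_zero, Matrix.zero_mul,
          cAx, cA, dAx, dA, cZx, cZ, dZx, dZ, hBZx, hBZ, hZCx, hZC, hBZdx, hBZd, hZdCx, hZdC,
          hBCAx, hBCA, add_zero, zero_add, sub_zero, sub_self]
  have hFE : F * E = 0 := by
    rw [hF, hE, Matrix.fromBlocks_multiply]
    refine fb_zero ?_ ?_ ?_ ?_ <;>
      · simp only [pow_two, Matrix.mul_assoc, Matrix.mul_sub, Matrix.sub_mul, Matrix.mul_add,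
          Matrix.add_mul, Matrix.mul_one, Matrix.one_mul, Matrix.mul_zero, Matrix.zero_mul,
          cAx, cA, dAx, dA, cZx, cZ, dZx, dZ, hBZx, hBZ, hZCx, hZC, hBZdx, hBZd, hZdCx, hZdC,
          hBCAx, hBCA, add_zero, zero_add, sub_zero, sub_self]
  have hNF : N * F = G := by
    rw [hN, hF, hG, Matrix.fromBlocks_multiply]
    refine fb_eq ?_ ?_ ?_ ?_ <;>
      · simp only [pow_two, Matrix.mul_assoc, Matrix.mul_sub, Matrix.sub_mul, Matrix.mul_add,
          Matrix.add_mul, Matrix.mul_one, Matrix.one_mul, Matrix.mul_zero, Matrix.zero_mul,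
          cAx, cA, dAx, dA, cZx, cZ, dZx, dZ, hBZx, hBZ, hZCx, hZC, hBZdx, hBZd, hZdCx, hZdC,
          hBCAx, hBCA, add_zero, zero_add, sub_zero, sub_self]
  have hFN : F * N = G := by
    rw [hN, hF, hG, Matrix.fromBlocks_multiply]
    refine fb_eq ?_ ?_ ?_ ?_ <;>
      · simp only [pow_two, Matrix.mul_assoc, Matrix.mul_sub, Matrix.sub_mul, Matrix.mul_add,
          Matrix.add_mul, Matrix.mul_one, Matrix.one_mul, Matrix.mul_zero, Matrix.zero_mul,
          cAx, cA, dAx, dA, cZx, cZ, dZx, dZ, hBZx, hBZ, hZCx, hZC, hBZdx, hBZd, hZdCx, hZdC,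
          hBCAx, hBCA, add_zero, zero_add, sub_zero, sub_self]
  have hGF : G * F = F := by
    rw [hF, hG, Matrix.fromBlocks_multiply]
    refine fb_eq ?_ ?_ ?_ ?_ <;>
      · simp only [pow_two, Matrix.mul_assoc, Matrix.mul_sub, Matrix.sub_mul, Matrix.mul_add,
          Matrix.add_mul, Matrix.mul_one, Matrix.one_mul, Matrix.mul_zero, Matrix.zero_mul,
          cAx, cA, dAx, dA, cZx, cZ, dZx, dZ, hBZx, hBZ, hZCx, hZC, hBZdx, hBZd, hZdCx, hZdC,
          hBCAx, hBCA, add_zero, zero_add, sub_zero, sub_self]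
  have hPE : P + E = Matrix.fromBlocks (A ^ 2 * Ad) (A * Ad * B) C (C * Ad * B) := by
    rw [hP, hE, Matrix.fromBlocks_add]
    refine fb_eq ?_ ?_ ?_ ?_
    · rw [add_zero]
    · rw [add_zero]
    · simp only [pow_two, Matrix.mul_assoc, Matrix.mul_sub, Matrix.sub_mul, Matrix.mul_add,
          Matrix.add_mul, Matrix.mul_one, Matrix.one_mul, Matrix.mul_zero, Matrix.zero_mul,
          cAx, cA, dAx, dA, cZx, cZ, dZx, dZ, hBZx, hBZ, hZCx, hZC, hBZdx, hBZd, hZdCx, hZdC,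
          hBCAx, hBCA, add_zero, zero_add, sub_zero, sub_self]
      abel
    · rw [add_zero]
  have hPNx : ∀ x : Matrix (Fin m ⊕ Fin n) (Fin m ⊕ Fin n) ℂ, P * (N * x) = 0 :=
    fun x => by rw [← Matrix.mul_assoc, hPN, Matrix.zero_mul]
  have hNPx : ∀ x : Matrix (Fin m ⊕ Fin n) (Fin m ⊕ Fin n) ℂ, N * (P * x) = 0 :=
    fun x => by rw [← Matrix.mul_assoc, hNP, Matrix.zero_mul]
  have hEPx : ∀ x : Matrix (Fin m ⊕ Fin n) (Fin m ⊕ Fin n) ℂ, E * (P * x) = 0 :=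
    fun x => by rw [← Matrix.mul_assoc, hEP, Matrix.zero_mul]
  have hNEx : ∀ x : Matrix (Fin m ⊕ Fin n) (Fin m ⊕ Fin n) ℂ, N * (E * x) = 0 :=
    fun x => by rw [← Matrix.mul_assoc, hNE, Matrix.zero_mul]
  have hEEx : ∀ x : Matrix (Fin m ⊕ Fin n) (Fin m ⊕ Fin n) ℂ, E * (E * x) = 0 :=
    fun x => by rw [← Matrix.mul_assoc, hEE, Matrix.zero_mul]
  have hFPx : ∀ x : Matrix (Fin m ⊕ Fin n) (Fin m ⊕ Fin n) ℂ, F * (P * x) = 0 :=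
    fun x => by rw [← Matrix.mul_assoc, hFP, Matrix.zero_mul]
  have hEFx : ∀ x : Matrix (Fin m ⊕ Fin n) (Fin m ⊕ Fin n) ℂ, E * (F * x) = 0 :=
    fun x => by rw [← Matrix.mul_assoc, hEF, Matrix.zero_mul]
  have hFEx : ∀ x : Matrix (Fin m ⊕ Fin n) (Fin m ⊕ Fin n) ℂ, F * (E * x) = 0 :=
    fun x => by rw [← Matrix.mul_assoc, hFE, Matrix.zero_mul]
  have cP : Pd * P = P * Pd := hPd.1.symm
  have cPx : ∀ x : Matrix (Fin m ⊕ Fin n) (Fin m ⊕ Fin n) ℂ, Pd * (P * x) = P * (Pd * x) :=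
    fun x => by rw [← Matrix.mul_assoc, cP, Matrix.mul_assoc]
  have dP : P * (Pd * Pd) = Pd := by have h2 := hPd.axx; rwa [Matrix.mul_assoc] at h2
  have dPx : ∀ x : Matrix (Fin m ⊕ Fin n) (Fin m ⊕ Fin n) ℂ, P * (Pd * (Pd * x)) = Pd * x :=
    fun x => by rw [← Matrix.mul_assoc, ← Matrix.mul_assoc, hPd.axx]
  have hNPd : N * Pd = 0 := by
    rw [← dP, ← Matrix.mul_assoc, hNP, Matrix.zero_mul]
  have hPdN : Pd * N = 0 := by
    rw [← hPd.xxa, Matrix.mul_assoc, Matrix.mul_assoc, hPN, Matrix.mul_zero, Matrix.mul_zero]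
  have hEPd : E * Pd = 0 := by
    rw [← dP, ← Matrix.mul_assoc, hEP, Matrix.zero_mul]
  have hPFj : ∀ j : ℕ, P * Matrix.fromBlocks 0 0 0 (Zd ^ (j + 1)) = 0 := by
    intro j
    rw [hP, Matrix.fromBlocks_multiply]
    refine fb_zero ?_ ?_ ?_ ?_ <;>
      · simp only [pow_succ', Matrix.mul_assoc, Matrix.mul_zero, Matrix.zero_mul, add_zero,
          zero_add, hBZdx, hBZd]
  have hPF : P * F = 0 := hPF0
  have hPdF : Pd * F = 0 := by
    rw [← hPd.xxa, Matrix.mul_assoc, Matrix.mul_assoc, hPF, Matrix.mul_zero, Matrix.mul_zero]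
  -- T = N + Q
  rw [← hPE] at hT
  set Q : Matrix (Fin m ⊕ Fin n) (Fin m ⊕ Fin n) ℂ := (1 - P * Pd) * (P + E) with hQdef
  -- index bounds
  obtain ⟨kA, hkA⟩ := hAd.2.2
  obtain ⟨kZ, hkZ⟩ := hZd.2.2
  have hAπ' : ∀ j, kA ≤ j → A ^ j * (1 - A * Ad) = 0 := by
    intro j hj
    obtain ⟨d, rfl⟩ : ∃ d, j = kA + d := ⟨j - kA, by omega⟩
    have hst : A ^ (kA + d + 1) * Ad = A ^ (kA + d) := hAd.pow_stable d kA hkA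
    rw [Matrix.mul_sub, Matrix.mul_one, ← Matrix.mul_assoc, ← pow_succ, hst, sub_self]
  have hZπ' : ∀ j, kZ ≤ j → Z ^ j * (1 - Z * Zd) = 0 := by
    intro j hj
    obtain ⟨d, rfl⟩ : ∃ d, j = kZ + d := ⟨j - kZ, by omega⟩
    have hst : Z ^ (kZ + d + 1) * Zd = Z ^ (kZ + d) := hZd.pow_stable d kZ hkZ
    rw [Matrix.mul_sub, Matrix.mul_one, ← Matrix.mul_assoc, ← pow_succ, hst, sub_self]
  have cPj : ∀ j : ℕ, (1 - P * Pd) * P ^ j = P ^ j * (1 - P * Pd) := by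
    intro j
    have c1 : Commute P (P * Pd) := (Commute.refl P).mul_right hPd.commute
    exact (((Commute.one_right (P ^ j)).sub_right (c1.pow_left j)).symm).eq.symm ▸ rfl
  have hPπ' : ∀ j, n' ≤ j → P ^ j * (1 - P * Pd) = 0 := by
    intro j hj
    obtain ⟨d, rfl⟩ : ∃ d, j = d + n' := ⟨j - n', by omega⟩
    rw [pow_add, Matrix.mul_assoc, hn'P, Matrix.mul_zero]
  have hπP' : ∀ j, n' ≤ j → (1 - P * Pd) * P ^ j = 0 := by
    intro j hj; rw [cPj j]; exact hPπ' j hj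
  -- N power formula
  have s1 : (1 - A * Ad) * (A * (1 - A * Ad)) = A * (1 - A * Ad) := by
    simp only [Matrix.mul_sub, Matrix.sub_mul, Matrix.mul_one, Matrix.one_mul,
      Matrix.mul_assoc, cAx, cA, dAx, dA, sub_self, Matrix.mul_zero, sub_zero]
  have s2 : (1 - A * Ad) * ((1 - A * Ad) * B) = (1 - A * Ad) * B := by
    simp only [Matrix.mul_sub, Matrix.sub_mul, Matrix.mul_one, Matrix.one_mul,
      Matrix.mul_assoc, cAx, cA, dAx, dA, sub_self, Matrix.mul_zero, sub_zero]
  have Npow : ∀ k : ℕ, N ^ (k + 1) =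
      Matrix.fromBlocks (A ^ (k + 1) * (1 - A * Ad)) (A ^ k * ((1 - A * Ad) * B)) 0
        (Z ^ (k + 1)) := by
    intro k
    induction k with
    | zero => rw [zero_add, pow_one, pow_one, pow_one, pow_zero, Matrix.one_mul]
    | succ k ih =>
        rw [pow_succ, ih, hN, Matrix.fromBlocks_multiply]
        refine fb_eq ?_ ?_ ?_ ?_
        · rw [Matrix.mul_zero, add_zero, Matrix.mul_assoc, s1, ← Matrix.mul_assoc, ← pow_succ]
        · rw [Matrix.mul_assoc (A ^ k) ((1 - A * Ad) * B) Z, Matrix.mul_assoc (1 - A * Ad) B Z,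
            hBZ, Matrix.mul_zero, Matrix.mul_zero, add_zero, Matrix.mul_assoc, s2]
        · rw [Matrix.zero_mul, Matrix.mul_zero, add_zero]
        · rw [Matrix.zero_mul, zero_add, ← pow_succ]
  have hNG' : ∀ j, kA + kZ + 1 ≤ j → N ^ j * G = N ^ j := by
    intro j hj
    obtain ⟨d, rfl⟩ : ∃ d, j = d + 1 := ⟨j - 1, by omega⟩
    rw [Npow d, hG, Matrix.fromBlocks_multiply]
    refine fb_eq ?_ ?_ ?_ ?_
    · rw [Matrix.mul_zero, Matrix.mul_zero, add_zero, hAπ' (d + 1) (by omega)]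
    · have r : A ^ d * ((1 - A * Ad) * B) = 0 := by
        rw [← Matrix.mul_assoc, hAπ' d (by omega), Matrix.zero_mul]
      rw [Matrix.mul_zero, zero_add, r, Matrix.zero_mul]
    · simp
    · rw [Matrix.zero_mul, zero_add]
      have r := hZπ' (d + 1) (by omega)
      rw [Matrix.mul_sub, Matrix.mul_one] at r
      exact (sub_eq_zero.mp r).symm
  -- Q lemmas
  have hEQ : E * Q = 0 := by
    rw [hQdef]
    simp only [Matrix.mul_sub, Matrix.sub_mul, Matrix.mul_add, Matrix.add_mul, Matrix.mul_one,
      Matrix.one_mul, Matrix.mul_assoc, hEPx, hEP, hEEx, hEE, Matrix.mul_zero, Matrix.zero_mul,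
      add_zero, zero_add, sub_self, sub_zero]
  have cπ : (1 - P * Pd) * P = P * (1 - P * Pd) := by
    have h0 := cPj 1; rwa [pow_one] at h0
  have iπ : (1 - P * Pd) * (1 - P * Pd) = 1 - P * Pd := by
    simp only [Matrix.mul_sub, Matrix.sub_mul, Matrix.mul_one, Matrix.one_mul,
      Matrix.mul_assoc, cPx, cP, dPx, dP, sub_self, Matrix.mul_zero, sub_zero]
  have hPQ : P * Q = (1 - P * Pd) * (P * (P + E)) := by
    rw [hQdef, ← Matrix.mul_assoc, ← cπ, Matrix.mul_assoc]
  have hPEQ : (P + E) * Q = (1 - P * Pd) * (P * (P + E)) := by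
    rw [Matrix.add_mul, hEQ, add_zero, hPQ]
  have hQpow : ∀ a : ℕ, Q ^ (a + 1) = (1 - P * Pd) * (P ^ a * (P + E)) := by
    intro a
    induction a with
    | zero => rw [zero_add, pow_one, pow_zero, Matrix.one_mul]
    | succ a ih =>
        calc Q ^ (a + 1 + 1) = Q ^ (a + 1) * Q := by rw [pow_succ]
          _ = (1 - P * Pd) * (P ^ a * ((P + E) * Q)) := by
              rw [ih, Matrix.mul_assoc, Matrix.mul_assoc]
          _ = (1 - P * Pd) * (P ^ a * ((1 - P * Pd) * (P * (P + E)))) := by rw [hPEQ]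
          _ = (1 - P * Pd) * ((1 - P * Pd) * (P ^ a * (P * (P + E)))) := by
              rw [← Matrix.mul_assoc (P ^ a), ← cPj a, Matrix.mul_assoc]
          _ = ((1 - P * Pd) * (1 - P * Pd)) * (P ^ a * (P * (P + E))) := by
              rw [Matrix.mul_assoc]
          _ = (1 - P * Pd) * (P ^ (a + 1) * (P + E)) := by
              rw [iπ, ← Matrix.mul_assoc (P ^ a), ← pow_succ]
  have hNQ : N * Q = 0 := by
    rw [hQdef]
    simp only [Matrix.mul_sub, Matrix.sub_mul, Matrix.mul_add, Matrix.add_mul, Matrix.mul_one,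
      Matrix.one_mul, Matrix.mul_assoc, hNPx, hNP, hNEx, hNE, Matrix.mul_zero, Matrix.zero_mul,
      add_zero, zero_add, sub_self, sub_zero]
  have hTpow : ∀ k : ℕ, T ^ (k + 1)
      = N ^ (k + 1) + ∑ a ∈ Finset.range (k + 1), Q ^ (a + 1) * N ^ (k - a) := by
    intro k
    induction k with
    | zero => simp only [zero_add, pow_one, Finset.sum_range_one, Nat.sub_zero, pow_zero,
        Matrix.mul_one]; exact hT
    | succ k ih =>
        have hNsum : N * (∑ a ∈ Finset.range (k + 1), Q ^ (a + 1) * N ^ (k - a)) = 0 := by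
          rw [Finset.mul_sum]
          refine Finset.sum_eq_zero fun a _ => ?_
          rw [pow_succ', ← Matrix.mul_assoc, ← Matrix.mul_assoc, hNQ, Matrix.zero_mul,
            Matrix.zero_mul]
        have hQsum : Q * (∑ a ∈ Finset.range (k + 1), Q ^ (a + 1) * N ^ (k - a))
            = ∑ a ∈ Finset.range (k + 1), Q ^ (a + 1 + 1) * N ^ (k - a) := by
          rw [Finset.mul_sum]
          refine Finset.sum_congr rfl fun a _ => ?_
          rw [← Matrix.mul_assoc, ← pow_succ']
        calc T ^ (k + 1 + 1) = T * T ^ (k + 1) := by rw [pow_succ']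
          _ = (N + Q) * (N ^ (k + 1) + ∑ a ∈ Finset.range (k + 1), Q ^ (a + 1) * N ^ (k - a)) := by
              rw [ih, hT]
          _ = N * N ^ (k + 1) + N * (∑ a ∈ Finset.range (k + 1), Q ^ (a + 1) * N ^ (k - a))
              + (Q * N ^ (k + 1)
                + Q * (∑ a ∈ Finset.range (k + 1), Q ^ (a + 1) * N ^ (k - a))) := by
              rw [Matrix.add_mul, Matrix.mul_add, Matrix.mul_add]
          _ = N ^ (k + 1 + 1)
              + (Q * N ^ (k + 1) + ∑ a ∈ Finset.range (k + 1), Q ^ (a + 1 + 1) * N ^ (k - a)) := by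
              rw [hNsum, hQsum, add_zero, ← pow_succ']
          _ = N ^ (k + 1 + 1) + ∑ a ∈ Finset.range (k + 1 + 1), Q ^ (a + 1) * N ^ (k + 1 - a) := by
              rw [Finset.sum_range_succ' (fun a => Q ^ (a + 1) * N ^ (k + 1 - a)) (k + 1)]
              simp only [Nat.succ_sub_succ, Nat.sub_zero, zero_add, pow_one]
              abel
  have hTG : T ^ (kA + kZ + n' + 1 + 1) * G = T ^ (kA + kZ + n' + 1 + 1) := by
    rw [hTpow (kA + kZ + n' + 1), Matrix.add_mul, Finset.sum_mul,
      hNG' (kA + kZ + n' + 1 + 1) (by omega)]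
    congr 1
    refine Finset.sum_congr rfl fun a ha => ?_
    rcases le_or_gt n' a with han | han
    · have hz : Q ^ (a + 1) = 0 := by
        rw [hQpow a, ← Matrix.mul_assoc, hπP' a han, Matrix.zero_mul]
      rw [hz, Matrix.zero_mul, Matrix.zero_mul]
    · simp only [Finset.mem_range] at ha
      rw [Matrix.mul_assoc, hNG' (kA + kZ + n' + 1 - a) (by omega)]
  have hQF : Q * F = 0 := by
    rw [hQdef, Matrix.mul_assoc, Matrix.add_mul, hPF, hEF, add_zero, Matrix.mul_zero]
  have hFQ : F * Q = 0 := by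
    rw [hQdef]
    simp only [Matrix.mul_sub, Matrix.sub_mul, Matrix.mul_add, Matrix.add_mul, Matrix.mul_one,
      Matrix.one_mul, Matrix.mul_assoc, hFPx, hFP, hFEx, hFE, Matrix.mul_zero, Matrix.zero_mul,
      add_zero, zero_add, sub_self, sub_zero]
  have hTF : T * F = G := by rw [hT, Matrix.add_mul, hNF, hQF, add_zero]
  have hFT : F * T = G := by rw [hT, Matrix.mul_add, hFN, hFQ, add_zero]
  have hFDI : IsDrazinInverse T F :=
    ⟨hTF.trans hFT.symm, by rw [hFT, hGF], ⟨kA + kZ + n' + 1 + 1, by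
      rw [pow_succ, Matrix.mul_assoc, hTF, hTG]⟩⟩
  have part2F : Td = F := drazin_unique hTd hFDI
  have hsum : (∑ j ∈ Finset.range n', P ^ j * Matrix.fromBlocks 0 0 0 (Zd ^ (j + 1))) = F := by
    obtain ⟨t, rfl⟩ : ∃ t, n' = t + 1 := ⟨n' - 1, by omega⟩
    rw [Finset.sum_range_succ']
    have hz : ∀ j ∈ Finset.range t,
        P ^ (j + 1) * Matrix.fromBlocks 0 0 0 (Zd ^ (j + 1 + 1)) = 0 := by
      intro j _
      rw [pow_succ, Matrix.mul_assoc, hPFj (j + 1), Matrix.mul_zero]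
    rw [Finset.sum_eq_zero hz, zero_add, pow_zero, Matrix.one_mul, zero_add, pow_one]
  refine ⟨by rw [part1, hU, hR], ?_, ?_⟩
  · rw [hsum, Matrix.sub_mul, Matrix.one_mul, Matrix.mul_assoc, hPdF, Matrix.mul_zero, sub_zero]
    exact part2F
  · -- Part 3
    rw [part2F]
    simp only [hTF]
    rw [part2F, hTF] at hgT
    -- M = P + N + E
    have hM : Matrix.fromBlocks A B C D = P + N + E := by
      rw [hP, hN, hE, Matrix.fromBlocks_add, Matrix.fromBlocks_add]
      refine fb_eq ?_ ?_ ?_ ?_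
      · simp only [pow_two, Matrix.mul_sub, Matrix.mul_one, Matrix.mul_assoc, add_zero]
        abel
      · simp only [Matrix.sub_mul, Matrix.one_mul, Matrix.mul_assoc, add_zero]
        abel
      · simp only [Matrix.mul_sub, Matrix.mul_one, Matrix.mul_assoc, zero_add]
        abel
      · rw [hZ, add_zero]
        abel
    -- more kill rules
    have hEG : E * G = 0 := by
      rw [hE, hG, Matrix.fromBlocks_multiply]
      refine fb_zero ?_ ?_ ?_ ?_ <;>
        simp only [Matrix.mul_zero, Matrix.zero_mul, add_zero, zero_add]
    have hTPd : T * Pd = 0 := by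
      rw [hT, Matrix.add_mul, hNPd, zero_add, hQdef]
      simp only [Matrix.mul_sub, Matrix.sub_mul, Matrix.mul_add, Matrix.add_mul,
        Matrix.mul_one, Matrix.one_mul, Matrix.mul_assoc, cPx, cP, dPx, dP, hEPd,
        Matrix.mul_zero, Matrix.zero_mul, add_zero, zero_add, sub_self, sub_zero]
    have hPdT : Pd * T = 0 := by
      rw [hT, Matrix.mul_add, hPdN, zero_add, hQdef]
      simp only [Matrix.mul_sub, Matrix.sub_mul, Matrix.mul_add, Matrix.add_mul,
        Matrix.mul_one, Matrix.one_mul, Matrix.mul_assoc, cPx, cP, dPx, dP, hEPd,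
        Matrix.mul_zero, Matrix.zero_mul, add_zero, zero_add, sub_self, sub_zero]
    have hFPd : F * Pd = 0 := by
      rw [← hPd.axx, ← Matrix.mul_assoc, ← Matrix.mul_assoc, hFP, Matrix.zero_mul,
        Matrix.zero_mul]
    have hGPd : G * Pd = 0 := by
      rw [← hNF, Matrix.mul_assoc, hFPd, Matrix.mul_zero]
    have hPdG : Pd * G = 0 := by
      rw [← hNF, ← Matrix.mul_assoc, hPdN, Matrix.zero_mul]
    have hGG : G * G = G :=
      calc G * G = G * (F * T) := by rw [hFT]
        _ = (G * F) * T := by rw [Matrix.mul_assoc]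
        _ = F * T := by rw [hGF]
        _ = G := hFT
    have hTG2 : T * G = G * T := by
      calc T * G = T * (F * T) := by rw [hFT]
        _ = (T * F) * T := by rw [Matrix.mul_assoc]
        _ = G * T := by rw [hTF]
    have hπG : (1 - G) * G = 0 := by
      rw [Matrix.sub_mul, Matrix.one_mul, hGG, sub_self]
    have hGπ : G * (1 - G) = 0 := by
      rw [Matrix.mul_sub, Matrix.mul_one, hGG, sub_self]
    have hπTPd : (1 - G) * Pd = Pd := by
      rw [Matrix.sub_mul, Matrix.one_mul, hGPd, sub_zero]
    have hπTF : (1 - G) * F = F - G * F := by rw [Matrix.sub_mul, Matrix.one_mul]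
    -- Pp
    set Pp : Matrix (Fin m ⊕ Fin n) (Fin m ⊕ Fin n) ℂ := P * Pd * (P + E) with hPp
    have hMPT : Matrix.fromBlocks A B C D = Pp + T := by
      rw [hM, hT, hPp, hQdef]
      have hc : P * Pd * (P + E) + (1 - P * Pd) * (P + E) = P + E := by
        rw [← Matrix.add_mul, add_sub_cancel, Matrix.one_mul]
      calc P + N + E = (P * Pd * (P + E) + (1 - P * Pd) * (P + E)) + N := by rw [hc]; abel
        _ = P * Pd * (P + E) + (N + (1 - P * Pd) * (P + E)) := by abel
    -- more facts
    have hEPPd : E * (P * Pd) = 0 := by rw [← Matrix.mul_assoc, hEP, Matrix.zero_mul]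
    have hTPPd : T * (P * Pd) = 0 := by rw [← cP, ← Matrix.mul_assoc, hTPd, Matrix.zero_mul]
    have hFPPd : F * (P * Pd) = 0 := by rw [← cP, ← Matrix.mul_assoc, hFPd, Matrix.zero_mul]
    have hGPPd : G * (P * Pd) = 0 := by rw [← cP, ← Matrix.mul_assoc, hGPd, Matrix.zero_mul]
    have hTPp : T * Pp = 0 := by rw [hPp, ← Matrix.mul_assoc, hTPPd, Matrix.zero_mul]
    have hFPp : F * Pp = 0 := by rw [hPp, ← Matrix.mul_assoc, hFPPd, Matrix.zero_mul]
    have hEPp : E * Pp = 0 := by rw [hPp, ← Matrix.mul_assoc, hEPPd, Matrix.zero_mul]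
    have hGPp : G * Pp = 0 := by rw [hPp, ← Matrix.mul_assoc, hGPPd, Matrix.zero_mul]
    have hPdPPd : Pd * (P * Pd) = Pd := by rw [cPx, dP]
    have hPdPp : Pd * Pp = P * Pd + Pd * E := by
      rw [hPp, ← Matrix.mul_assoc, hPdPPd, Matrix.mul_add, cP]
    have hPpPd : Pp * Pd = P * Pd := by
      rw [hPp, Matrix.mul_assoc, Matrix.add_mul, hEPd, add_zero, ← Matrix.mul_assoc]
      simp only [Matrix.mul_assoc, cPx, cP, dPx, dP]
    have hPG : P * G = 0 := by rw [← hNF, ← Matrix.mul_assoc, hPN, Matrix.zero_mul]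
    have hPdT0 : ∀ x : Matrix (Fin m ⊕ Fin n) (Fin m ⊕ Fin n) ℂ, Pd * (T * x) = 0 :=
      fun x => by rw [← Matrix.mul_assoc, hPdT, Matrix.zero_mul]
    -- E,T,N interaction
    have hNkQ : ∀ k : ℕ, E * (N ^ k * Q) = 0 := by
      intro k
      rcases k with _ | k
      · rw [pow_zero, Matrix.one_mul, hEQ]
      · rw [pow_succ, Matrix.mul_assoc, hNQ, Matrix.mul_zero, Matrix.mul_zero]
    have hETk : ∀ k : ℕ, E * T ^ k = E * N ^ k := by
      intro k
      induction k with
      | zero => rfl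
      | succ k ih =>
          rw [pow_succ, ← Matrix.mul_assoc, ih, Matrix.mul_assoc, hT, Matrix.mul_add,
            Matrix.mul_add, hNkQ, add_zero, ← pow_succ]
    have cNF : Commute N F := hNF.trans hFN.symm
    have hENkF : ∀ k : ℕ, E * N ^ k * F = 0 := by
      intro k
      rw [Matrix.mul_assoc, (cNF.pow_left k).eq, ← Matrix.mul_assoc, hEF, Matrix.zero_mul]
    have hENkG : ∀ k : ℕ, E * N ^ k * G = 0 := by
      intro k
      rw [Matrix.mul_assoc, ← hNF, ← Matrix.mul_assoc (N ^ k), ← pow_succ, ← Matrix.mul_assoc,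
        hENkF (k + 1)]
    have hENπ : ∀ k : ℕ, E * N ^ k * (1 - G) = E * N ^ k := by
      intro k
      rw [Matrix.mul_sub, Matrix.mul_one, hENkG, sub_zero]
    have hπT : (1 - G) * T = T * (1 - G) := by
      rw [Matrix.sub_mul, Matrix.mul_sub, Matrix.one_mul, Matrix.mul_one, hTG2]
    -- power helpers
    have w1 : ∀ j : ℕ, T * Pd ^ (j + 2) = 0 := by
      intro j; rw [pow_succ', ← Matrix.mul_assoc, hTPd, Matrix.zero_mul]
    have w1' : ∀ j : ℕ, T * Pd ^ (j + 1) = 0 := by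
      intro j; rw [pow_succ', ← Matrix.mul_assoc, hTPd, Matrix.zero_mul]
    have w2 : ∀ j : ℕ, F * Pd ^ (j + 1) = 0 := by
      intro j; rw [pow_succ', ← Matrix.mul_assoc, hFPd, Matrix.zero_mul]
    have w3 : ∀ j : ℕ, E * Pd ^ (j + 1) = 0 := by
      intro j; rw [pow_succ', ← Matrix.mul_assoc, hEPd, Matrix.zero_mul]
    have w4 : ∀ j : ℕ, G * Pd ^ (j + 1) = 0 := by
      intro j; rw [pow_succ', ← Matrix.mul_assoc, hGPd, Matrix.zero_mul]
    have wPPd : ∀ j : ℕ, P * Pd ^ (j + 2) = Pd ^ (j + 1) := by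
      intro j; rw [pow_succ' Pd (j + 1), pow_succ' Pd j, dPx]
    have wPpPd : ∀ j : ℕ, Pp * Pd ^ (j + 2) = Pd ^ (j + 1) := by
      intro j
      rw [pow_succ' Pd (j + 1), ← Matrix.mul_assoc, hPpPd, Matrix.mul_assoc,
        pow_succ' Pd j, dPx]
    set Xs : Matrix (Fin m ⊕ Fin n) (Fin m ⊕ Fin n) ℂ :=
      ∑ k ∈ Finset.range g, Pd ^ (k + 2) * E * T ^ k * (1 - G) with hXs
    set Rr : Matrix (Fin m ⊕ Fin n) (Fin m ⊕ Fin n) ℂ :=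
      ∑ k ∈ Finset.range g, Pd ^ (k + 1) * E * T ^ k * (1 - G) with hRr
    have hTXs : T * Xs = 0 := by
      rw [hXs, Finset.mul_sum]
      refine Finset.sum_eq_zero fun k _ => ?_
      rw [← Matrix.mul_assoc, ← Matrix.mul_assoc, ← Matrix.mul_assoc, w1 k, Matrix.zero_mul,
        Matrix.zero_mul, Matrix.zero_mul]
    have hTRr : T * Rr = 0 := by
      rw [hRr, Finset.mul_sum]
      refine Finset.sum_eq_zero fun k _ => ?_
      rw [← Matrix.mul_assoc, ← Matrix.mul_assoc, ← Matrix.mul_assoc, w1' k, Matrix.zero_mul,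
        Matrix.zero_mul, Matrix.zero_mul]
    have hERr : E * Rr = 0 := by
      rw [hRr, Finset.mul_sum]
      refine Finset.sum_eq_zero fun k _ => ?_
      rw [← Matrix.mul_assoc, ← Matrix.mul_assoc, ← Matrix.mul_assoc, w3 k, Matrix.zero_mul,
        Matrix.zero_mul, Matrix.zero_mul]
    have hFRr : F * Rr = 0 := by
      rw [hRr, Finset.mul_sum]
      refine Finset.sum_eq_zero fun k _ => ?_
      rw [← Matrix.mul_assoc, ← Matrix.mul_assoc, ← Matrix.mul_assoc, w2 k, Matrix.zero_mul,
        Matrix.zero_mul, Matrix.zero_mul]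
    have hGRr : G * Rr = 0 := by
      rw [hRr, Finset.mul_sum]
      refine Finset.sum_eq_zero fun k _ => ?_
      rw [← Matrix.mul_assoc, ← Matrix.mul_assoc, ← Matrix.mul_assoc, w4 k, Matrix.zero_mul,
        Matrix.zero_mul, Matrix.zero_mul]
    have hPdRr : Pd * Rr = Xs := by
      rw [hRr, hXs, Finset.mul_sum]
      refine Finset.sum_congr rfl fun k _ => ?_
      rw [← Matrix.mul_assoc, ← Matrix.mul_assoc, ← Matrix.mul_assoc, ← pow_succ']
    have hPpXs : Pp * Xs = Rr := by
      rw [hXs, hRr, Finset.mul_sum]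
      refine Finset.sum_congr rfl fun k _ => ?_
      rw [← Matrix.mul_assoc, ← Matrix.mul_assoc, ← Matrix.mul_assoc, wPpPd k]
    have hPpF : Pp * F = 0 := by
      rw [hPp, Matrix.mul_assoc, Matrix.add_mul, hPF, hEF, add_zero, Matrix.mul_zero]
    have hMX : (Matrix.fromBlocks A B C D) * (Pd + Xs + F) = P * Pd + Rr + G := by
      rw [hMPT, Matrix.add_mul, Matrix.mul_add, Matrix.mul_add, Matrix.mul_add, Matrix.mul_add,
        hPpPd, hTPd, hPpXs, hTXs, hPpF, hTF]
      abel
    have hGPpz : (1 - G) * Pp = Pp := by rw [Matrix.sub_mul, Matrix.one_mul, hGPp, sub_zero]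
    have hXsPp : Xs * Pp = 0 := by
      rw [hXs, Finset.sum_mul]
      refine Finset.sum_eq_zero fun k _ => ?_
      rw [Matrix.mul_assoc, hGPpz]
      rcases k with _ | k
      · rw [pow_zero, Matrix.mul_one, Matrix.mul_assoc, hEPp, Matrix.mul_zero]
      · rw [pow_succ T k, Matrix.mul_assoc _ _ Pp, Matrix.mul_assoc _ _ Pp, hTPp,
          Matrix.mul_zero, Matrix.mul_zero]
    have hXsT : Xs * T = ∑ k ∈ Finset.range g, Pd ^ (k + 2) * E * T ^ (k + 1) * (1 - G) := by
      rw [hXs, Finset.sum_mul]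
      refine Finset.sum_congr rfl fun k _ => ?_
      rw [Matrix.mul_assoc, hπT, ← Matrix.mul_assoc, Matrix.mul_assoc (Pd ^ (k + 2) * E) (T ^ k) T,
        ← pow_succ]
    have hkey : Pd * E + (∑ k ∈ Finset.range g, Pd ^ (k + 2) * E * T ^ (k + 1) * (1 - G)) = Rr := by
      obtain ⟨g', rfl⟩ : ∃ t, g = t + 1 := ⟨g - 1, by omega⟩
      rw [hRr, Finset.sum_range_succ' (fun k => Pd ^ (k + 1) * E * T ^ k * (1 - G)) g',
        Finset.sum_range_succ (fun k => Pd ^ (k + 2) * E * T ^ (k + 1) * (1 - G)) g']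
      have hlast : Pd ^ (g' + 2) * E * T ^ (g' + 1) * (1 - G) = 0 := by
        rw [Matrix.mul_assoc, hgT, Matrix.mul_zero]
      have hf0 : Pd ^ (0 + 1) * E * T ^ 0 * (1 - G) = Pd * E := by
        rw [zero_add, pow_one, pow_zero, Matrix.mul_one, Matrix.mul_assoc, Matrix.mul_sub,
          Matrix.mul_one, hEG, sub_zero]
      rw [hlast, add_zero, hf0, add_comm]
    have hXMeq : (Pd + Xs + F) * (Matrix.fromBlocks A B C D) = P * Pd + Rr + G := by
      rw [hMPT, Matrix.mul_add, Matrix.add_mul, Matrix.add_mul, Matrix.add_mul, Matrix.add_mul,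
        hPdPp, hPdT, hXsPp, hXsT, hFPp, hFT]
      rw [← hkey]
      abel
    have hππPPd : (1 - G) * (P * Pd) = P * Pd := by
      rw [Matrix.sub_mul, Matrix.one_mul, hGPPd, sub_zero]
    have hπRr : (1 - G) * Rr = Rr := by
      rw [Matrix.sub_mul, Matrix.one_mul, hGRr, sub_zero]
    have hXsPPd : Xs * (P * Pd) = 0 := by
      rw [hXs, Finset.sum_mul]
      refine Finset.sum_eq_zero fun k _ => ?_
      rw [Matrix.mul_assoc, hππPPd]
      rcases k with _ | k
      · rw [pow_zero, Matrix.mul_one, Matrix.mul_assoc, hEPPd, Matrix.mul_zero]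
      · rw [pow_succ T k, Matrix.mul_assoc _ _ (P * Pd), Matrix.mul_assoc _ _ (P * Pd), hTPPd,
          Matrix.mul_zero, Matrix.mul_zero]
    have hXsRr : Xs * Rr = 0 := by
      rw [hXs, Finset.sum_mul]
      refine Finset.sum_eq_zero fun k _ => ?_
      rw [Matrix.mul_assoc, hπRr]
      rcases k with _ | k
      · rw [pow_zero, Matrix.mul_one, Matrix.mul_assoc, hERr, Matrix.mul_zero]
      · rw [pow_succ T k, Matrix.mul_assoc _ _ Rr, Matrix.mul_assoc _ _ Rr, hTRr,
          Matrix.mul_zero, Matrix.mul_zero]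
    have hXsG : Xs * G = 0 := by
      rw [hXs, Finset.sum_mul]
      refine Finset.sum_eq_zero fun k _ => ?_
      rw [Matrix.mul_assoc, hπG, Matrix.mul_zero]
    have hFG : F * G = F := by rw [← hTF, ← Matrix.mul_assoc, hFT, hGF]
    have hXMX : (Pd + Xs + F) * (P * Pd + Rr + G) = Pd + Xs + F := by
      rw [Matrix.add_mul, Matrix.add_mul, Matrix.mul_add, Matrix.mul_add, Matrix.mul_add,
        Matrix.mul_add, Matrix.mul_add, Matrix.mul_add, hPdPPd, hPdRr, hPdG, hXsPPd, hXsRr,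
        hXsG, hFPPd, hFRr, hFG]
      abel
    refine ⟨hMX.trans hXMeq.symm, ?_, ?_⟩
    · rw [Matrix.mul_assoc, hMX, hXMX]
    · -- third axiom
      obtain ⟨g', rfl⟩ : ∃ t, g = t + 1 := ⟨g - 1, by omega⟩
      refine ⟨g' + 1, ?_⟩
      have hPdPPPd : Pd * (P * (P * Pd)) = P * Pd := by rw [cPx, cPx, dP]
      have hPpPow : ∀ q : ℕ, Pp ^ (q + 1) = P ^ (q + 1) * Pd * (P + E) := by
        intro q
        induction q with
        | zero => rw [zero_add, pow_one, pow_one]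
        | succ q ih =>
            have h1 : (P + E) * Pp = P * (P * Pd) * (P + E) := by
              rw [hPp, ← Matrix.mul_assoc, Matrix.add_mul, hEPPd, add_zero]
            calc Pp ^ (q + 1 + 1) = Pp ^ (q + 1) * Pp := by rw [pow_succ]
              _ = P ^ (q + 1) * Pd * ((P + E) * Pp) := by rw [ih, Matrix.mul_assoc]
              _ = P ^ (q + 1) * Pd * (P * (P * Pd) * (P + E)) := by rw [h1]
              _ = (P ^ (q + 1) * Pd * (P * (P * Pd))) * (P + E) := by rw [← Matrix.mul_assoc]
              _ = (P ^ (q + 1) * (Pd * (P * (P * Pd)))) * (P + E) := by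
                  rw [Matrix.mul_assoc (P ^ (q + 1)) Pd (P * (P * Pd))]
              _ = (P ^ (q + 1) * (P * Pd)) * (P + E) := by rw [hPdPPPd]
              _ = P ^ (q + 1 + 1) * Pd * (P + E) := by
                  rw [← Matrix.mul_assoc, ← pow_succ, Matrix.mul_assoc]
      have hTPpk : ∀ b : ℕ, T ^ (b + 1) * Pp = 0 := by
        intro b; rw [pow_succ, Matrix.mul_assoc, hTPp, Matrix.mul_zero]
      have hMpow : ∀ q : ℕ, (Matrix.fromBlocks A B C D) ^ (q + 1)
          = Pp ^ (q + 1) + ∑ b ∈ Finset.range (q + 1), Pp ^ (q - b) * T ^ (b + 1) := by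
        intro q
        induction q with
        | zero =>
            simp only [zero_add, pow_one, Finset.sum_range_one, Nat.sub_zero, pow_zero,
              Matrix.one_mul]
            exact hMPT
        | succ q ih =>
            have hsump : (∑ b ∈ Finset.range (q + 1), Pp ^ (q - b) * T ^ (b + 1)) * Pp = 0 := by
              rw [Finset.sum_mul]
              refine Finset.sum_eq_zero fun b _ => ?_
              rw [Matrix.mul_assoc, hTPpk b, Matrix.mul_zero]
            have hsumt : (∑ b ∈ Finset.range (q + 1), Pp ^ (q - b) * T ^ (b + 1)) * T
                = ∑ b ∈ Finset.range (q + 1), Pp ^ (q - b) * T ^ (b + 1 + 1) := by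
              rw [Finset.sum_mul]
              refine Finset.sum_congr rfl fun b _ => ?_
              rw [Matrix.mul_assoc, ← pow_succ]
            calc (Matrix.fromBlocks A B C D) ^ (q + 1 + 1)
                = (Matrix.fromBlocks A B C D) ^ (q + 1) * (Matrix.fromBlocks A B C D) := by
                  rw [pow_succ]
              _ = (Pp ^ (q + 1) + ∑ b ∈ Finset.range (q + 1), Pp ^ (q - b) * T ^ (b + 1))
                  * (Pp + T) := by rw [ih, hMPT]
              _ = (Pp ^ (q + 1) * Pp + Pp ^ (q + 1) * T)
                  + ((∑ b ∈ Finset.range (q + 1), Pp ^ (q - b) * T ^ (b + 1)) * Pp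
                    + (∑ b ∈ Finset.range (q + 1), Pp ^ (q - b) * T ^ (b + 1)) * T) := by
                  rw [Matrix.add_mul, Matrix.mul_add, Matrix.mul_add]
              _ = (Pp ^ (q + 1 + 1) + Pp ^ (q + 1) * T)
                  + ∑ b ∈ Finset.range (q + 1), Pp ^ (q - b) * T ^ (b + 1 + 1) := by
                  rw [hsump, hsumt, zero_add, ← pow_succ]
              _ = Pp ^ (q + 1 + 1)
                  + ∑ b ∈ Finset.range (q + 1 + 1), Pp ^ (q + 1 - b) * T ^ (b + 1) := by
                  rw [Finset.sum_range_succ' (fun b => Pp ^ (q + 1 - b) * T ^ (b + 1)) (q + 1)]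
                  simp only [Nat.succ_sub_succ, Nat.sub_zero, zero_add, pow_one, pow_zero,
                    Matrix.one_mul]
                  abel
      have hPcol : ∀ u j : ℕ, P ^ (u + (j + 1)) * Pd ^ (j + 1 + 1) = P ^ u * Pd := by
        intro u j
        rw [pow_add, pow_succ Pd (j + 1), Matrix.mul_assoc,
          ← Matrix.mul_assoc (P ^ (j + 1)) (Pd ^ (j + 1)) Pd,
          ← Commute.mul_pow hPd.commute (j + 1),
          IsIdempotentElem.pow_succ_eq j hPd.ax_idem, Matrix.mul_assoc, dP]
      have hPpaT : ∀ a b : ℕ, Pp ^ (a + 1) * (T ^ (b + 1) * (1 - G))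
          = P ^ (a + 1) * (Pd * (E * N ^ (b + 1))) := by
        intro a b
        have hE1 : E * (T ^ (b + 1) * (1 - G)) = E * N ^ (b + 1) := by
          rw [← Matrix.mul_assoc, hETk (b + 1), hENπ (b + 1)]
        have hP1 : Pd * (P * (T ^ (b + 1) * (1 - G))) = 0 := by
          rw [cPx, pow_succ' T b, Matrix.mul_assoc, hPdT0, Matrix.mul_zero]
        rw [hPpPow a, Matrix.mul_assoc, Matrix.add_mul, hE1, Matrix.mul_add,
          Matrix.mul_assoc (P ^ (a + 1)) Pd (P * (T ^ (b + 1) * (1 - G))), hP1,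
          Matrix.mul_zero, zero_add, Matrix.mul_assoc]
      have hPpPPd : Pp ^ (g' + 1) * (P * Pd) = P ^ (g' + 1) * (P * Pd) := by
        rw [hPpPow g', Matrix.mul_assoc,
          (show (P + E) * (P * Pd) = P * (P * Pd) from by rw [Matrix.add_mul, hEPPd, add_zero]),
          Matrix.mul_assoc, hPdPPPd]
      have hPpG0 : Pp ^ (g' + 1) * G = 0 := by
        rw [hPpPow g', Matrix.mul_assoc,
          (show (P + E) * G = 0 from by rw [Matrix.add_mul, hPG, hEG, add_zero]),
          Matrix.mul_zero]
      have hPpRr : Pp ^ (g' + 1) * Rr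
          = ∑ k ∈ Finset.range (g' + 1), P ^ (g' + 1) * Pd ^ (k + 1) * (E * N ^ k) := by
        rw [hRr, Finset.mul_sum]
        refine Finset.sum_congr rfl fun k _ => ?_
        have hcol : Pp ^ (g' + 1) * Pd ^ (k + 1) = P ^ (g' + 1) * Pd ^ (k + 1) := by
          rw [hPpPow g', Matrix.mul_assoc,
            (show (P + E) * Pd ^ (k + 1) = P * Pd ^ (k + 1) from by
              rw [Matrix.add_mul, w3 k, add_zero]),
            Matrix.mul_assoc, cPx, ← pow_succ', wPPd k]
        calc Pp ^ (g' + 1) * (Pd ^ (k + 1) * E * T ^ k * (1 - G))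
            = ((Pp ^ (g' + 1) * Pd ^ (k + 1)) * E * T ^ k) * (1 - G) := by
              rw [← Matrix.mul_assoc, ← Matrix.mul_assoc, ← Matrix.mul_assoc]
          _ = ((P ^ (g' + 1) * Pd ^ (k + 1)) * (E * T ^ k)) * (1 - G) := by
              rw [hcol, Matrix.mul_assoc (P ^ (g' + 1) * Pd ^ (k + 1)) E (T ^ k)]
          _ = (P ^ (g' + 1) * Pd ^ (k + 1)) * ((E * N ^ k) * (1 - G)) := by
              rw [hETk k, Matrix.mul_assoc]
          _ = P ^ (g' + 1) * Pd ^ (k + 1) * (E * N ^ k) := by rw [hENπ k]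
      have hPpe : Pp ^ (g' + 1) * (P * Pd + Rr + G)
          = Pp ^ (g' + 1) + ∑ b ∈ Finset.range g', P ^ (g' - b) * (Pd * (E * N ^ (b + 1))) := by
        rw [Matrix.mul_add, Matrix.mul_add, hPpPPd, hPpRr, hPpG0, add_zero,
          Finset.sum_range_succ' (fun k => P ^ (g' + 1) * Pd ^ (k + 1) * (E * N ^ k)) g']
        have hk0 : P ^ (g' + 1) * Pd ^ (0 + 1) * (E * N ^ 0) = P ^ (g' + 1) * Pd * E := by
          rw [zero_add, pow_one, pow_zero, Matrix.mul_one]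
        have hterm : ∀ k ∈ Finset.range g', P ^ (g' + 1) * Pd ^ (k + 1 + 1) * (E * N ^ (k + 1))
            = P ^ (g' - k) * (Pd * (E * N ^ (k + 1))) := by
          intro k hk
          simp only [Finset.mem_range] at hk
          rw [show g' + 1 = (g' - k) + (k + 1) from by omega, hPcol (g' - k) k,
            Matrix.mul_assoc]
        rw [Finset.sum_congr rfl hterm, hk0, hPpPow g', Matrix.mul_add,
          (show P ^ (g' + 1) * Pd * P = P ^ (g' + 1) * (P * Pd) from by
            rw [Matrix.mul_assoc, cP])]
        abel
      have hBsum : (∑ b ∈ Finset.range (g' + 1), Pp ^ (g' - b) * T ^ (b + 1))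
          * (P * Pd + Rr + G)
          = ∑ b ∈ Finset.range (g' + 1), Pp ^ (g' - b) * (T ^ (b + 1) * G) := by
        rw [Finset.sum_mul]
        refine Finset.sum_congr rfl fun b _ => ?_
        have h1 : Pp ^ (g' - b) * T ^ (b + 1) * (P * Pd) = 0 := by
          rw [Matrix.mul_assoc, pow_succ T b, Matrix.mul_assoc, hTPPd, Matrix.mul_zero,
            Matrix.mul_zero]
        have h2 : Pp ^ (g' - b) * T ^ (b + 1) * Rr = 0 := by
          rw [Matrix.mul_assoc, pow_succ T b, Matrix.mul_assoc, hTRr, Matrix.mul_zero,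
            Matrix.mul_zero]
        rw [Matrix.mul_add, Matrix.mul_add, h1, h2, zero_add, zero_add, Matrix.mul_assoc]
      have hBsum' : (∑ b ∈ Finset.range (g' + 1), Pp ^ (g' - b) * (T ^ (b + 1) * G))
          = (∑ b ∈ Finset.range (g' + 1), Pp ^ (g' - b) * T ^ (b + 1))
            - ∑ b ∈ Finset.range (g' + 1), Pp ^ (g' - b) * (T ^ (b + 1) * (1 - G)) := by
        rw [← Finset.sum_sub_distrib]
        refine Finset.sum_congr rfl fun b _ => ?_
        rw [Matrix.mul_sub, Matrix.mul_one, Matrix.mul_sub, sub_sub_cancel]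
      have hS1eq : (∑ b ∈ Finset.range (g' + 1), Pp ^ (g' - b) * (T ^ (b + 1) * (1 - G)))
          = ∑ b ∈ Finset.range g', P ^ (g' - b) * (Pd * (E * N ^ (b + 1))) := by
        rw [Finset.sum_range_succ, Nat.sub_self, pow_zero, hgT, Matrix.mul_zero, add_zero]
        refine Finset.sum_congr rfl fun b hb => ?_
        simp only [Finset.mem_range] at hb
        rw [show g' - b = (g' - b - 1) + 1 from by omega, hPpaT (g' - b - 1) b]
      have hfinal : (Matrix.fromBlocks A B C D) ^ (g' + 1) * (P * Pd + Rr + G)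
          = (Matrix.fromBlocks A B C D) ^ (g' + 1) := by
        rw [hMpow g', Matrix.add_mul, hPpe, hBsum, hBsum', hS1eq]
        abel
      rw [pow_succ, Matrix.mul_assoc, hMX, hfinal]
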